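/- Let f: ℝ^d → ℝ be differentiable, convex and L-smooth, with a minimizer x⋆ where ∇f(x⋆) = 0, and let γ > 0. Then for any x ∈ ℝ^d: f(prox_{γf}(x)) − f(x⋆) ≥ (1/(1+γL)²) (f(x) − f(x⋆)). -/

import Mathlib

open InnerProductSpace

local notation "⟪" x ", " y "⟫" => @inner ℝ _ _ x y

section Aux

variable {E : Type*} [NormedAddCommGroup E] [InnerProductSpace ℝ E] [CompleteSpace E]
  {f : E → ℝ} {g : E → E}

lemma aux_line (hgrad : ∀ x, HasGradientAt f (g x) x) (x v : E) (t : ℝ) :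
    HasDerivAt (fun t : ℝ => f (x + t • v)) ⟪g (x + t • v), v⟫ t := by
  have h1 : HasDerivAt (fun t : ℝ => x + t • v) v t := by
    simpa using ((hasDerivAt_id t).smul_const v).const_add x
  have := (hgrad (x + t • v)).hasFDerivAt.comp_hasDerivAt t h1
  simpa [Function.comp_def] using this

lemma aux_subgrad (hconv : ConvexOn ℝ Set.univ f)
    (hgrad : ∀ x, HasGradientAt f (g x) x) (x y : E) :
    f x + ⟪g x, y - x⟫ ≤ f y := by
  set v := y - x with hv
  have hh : ConvexOn ℝ Set.univ (fun t : ℝ => f (x + t • v)) := by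
    have := hconv.comp_affineMap (AffineMap.lineMap x y)
    simp only [Set.preimage_univ] at this
    have heq : (fun t : ℝ => f (x + t • v)) = f ∘ AffineMap.lineMap x y := by
      funext t
      simp only [Function.comp_apply, AffineMap.lineMap_apply_module', hv]
      congr 1
      abel
    rw [heq]
    exact this
  have hs := hh.le_slope_of_hasDerivAt (Set.mem_univ (0:ℝ)) (Set.mem_univ (1:ℝ))
    zero_lt_one (aux_line hgrad x v 0)
  simp only [slope, zero_smul, add_zero, one_smul, vsub_eq_sub, sub_zero, inv_one,
    smul_eq_mul, one_mul] at hs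
  have hxy : x + v = y := by rw [hv]; abel
  rw [hxy] at hs
  linarith

lemma aux_descent {L : ℝ} (hL : 0 ≤ L)
    (hgrad : ∀ x, HasGradientAt f (g x) x)
    (hlip : ∀ x y, ‖g x - g y‖ ≤ L * ‖x - y‖) (x y : E) :
    f y ≤ f x + ⟪g x, y - x⟫ + L / 2 * ‖y - x‖ ^ 2 := by
  set v := y - x with hv
  set φ : ℝ → ℝ := fun t => f (x + t • v) - t * ⟪g x, v⟫ - L / 2 * t ^ 2 * ‖v‖ ^ 2 with hφdef
  have hφ : ∀ t : ℝ, HasDerivAt φ (⟪g (x + t • v), v⟫ - ⟪g x, v⟫ - L * t * ‖v‖ ^ 2) t := by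
    intro t
    have h2 : HasDerivAt (fun t : ℝ => t * ⟪g x, v⟫) ⟪g x, v⟫ t := by
      simpa using (hasDerivAt_id t).mul_const ⟪g x, v⟫
    have h3 : HasDerivAt (fun t : ℝ => L / 2 * t ^ 2 * ‖v‖ ^ 2) (L * t * ‖v‖ ^ 2) t := by
      have := ((hasDerivAt_pow 2 t).const_mul (L / 2)).mul_const (‖v‖ ^ 2)
      exact this.congr_deriv (by push_cast; ring)
    exact ((aux_line hgrad x v t).sub h2).sub h3
  have hderiv : ∀ t ∈ Set.Ioo (0:ℝ) 1, deriv φ t ≤ 0 := by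
    intro t ht
    rw [(hφ t).deriv]
    have h1 : ⟪g (x + t • v) - g x, v⟫ ≤ ‖g (x + t • v) - g x‖ * ‖v‖ :=
      real_inner_le_norm _ _
    have h2 : ‖g (x + t • v) - g x‖ ≤ L * ‖t • v‖ := by
      simpa using hlip (x + t • v) x
    have h3 : ‖t • v‖ = t * ‖v‖ := by
      rw [norm_smul, Real.norm_eq_abs, abs_of_pos ht.1]
    rw [inner_sub_left] at h1
    nlinarith [norm_nonneg v, mul_nonneg hL (norm_nonneg v)]
  have hanti : AntitoneOn φ (Set.Icc (0:ℝ) 1) := by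
    apply antitoneOn_of_deriv_nonpos (convex_Icc 0 1)
    · exact fun t _ => (hφ t).differentiableAt.continuousAt.continuousWithinAt
    · intro t ht
      rw [interior_Icc] at ht
      exact (hφ t).differentiableAt.differentiableWithinAt
    · intro t ht
      rw [interior_Icc] at ht
      exact hderiv t ht
  have := hanti (Set.left_mem_Icc.2 zero_le_one) (Set.right_mem_Icc.2 zero_le_one) zero_le_one
  simp only [hφdef] at this
  simp only [zero_smul, add_zero, one_smul, zero_mul, one_pow, mul_one] at this
  have hxy : x + v = y := by rw [hv]; abel
  rw [hxy] at this
  linarith [this]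

end Aux

/-- Let `f : ℝ^d → ℝ` be differentiable, convex and `L`-smooth, with a minimizer `x⋆` where
`∇f(x⋆) = 0`, and let `γ > 0`. Then for any `x` and any `p = prox_{γf}(x)` (the minimizer of
`z ↦ f(z) + (1/(2γ))‖z − x‖²`):
`f(p) − f(x⋆) ≥ (1/(1+γL)²) (f(x) − f(x⋆))`. -/
theorem stmt13 {d : ℕ} (L γ : ℝ) (hL : 0 < L) (hγ : 0 < γ)
    (f : EuclideanSpace ℝ (Fin d) → ℝ)
    (g : EuclideanSpace ℝ (Fin d) → EuclideanSpace ℝ (Fin d))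
    (hconv : ConvexOn ℝ Set.univ f)
    (hgrad : ∀ x, HasGradientAt f (g x) x)
    (hlip : ∀ x y, ‖g x - g y‖ ≤ L * ‖x - y‖)
    (xs : EuclideanSpace ℝ (Fin d)) (hxs : g xs = 0) :
    ∀ (x p : EuclideanSpace ℝ (Fin d)),
      (∀ z, f p + (1 / (2 * γ)) * ‖p - x‖ ^ 2 ≤ f z + (1 / (2 * γ)) * ‖z - x‖ ^ 2) →
      f p - f xs ≥ (1 / (1 + γ * L) ^ 2) * (f x - f xs) := by
  intro x p hp
  -- stationarity of the prox point
  have hq : HasFDerivAt (fun z : EuclideanSpace ℝ (Fin d) => ‖z - x‖ ^ 2)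
      (2 • (innerSL ℝ (p - x)).comp (ContinuousLinearMap.id ℝ _)) p := by
    simpa using ((hasFDerivAt_id p).sub_const x).norm_sq
  have hF : HasFDerivAt (fun z => f z + (1 / (2 * γ)) * ‖z - x‖ ^ 2)
      ((toDual ℝ _) (g p) + (1 / (2 * γ)) • (2 • (innerSL ℝ (p - x)).comp (ContinuousLinearMap.id ℝ _))) p :=
    (hgrad p).hasFDerivAt.add (hq.const_mul (1 / (2 * γ)))
  have hmin : IsLocalMin (fun z => f z + (1 / (2 * γ)) * ‖z - x‖ ^ 2) p :=
    Filter.Eventually.of_forall hp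
  have hzero := hmin.hasFDerivAt_eq_zero hF
  have hkey : g p + γ⁻¹ • (p - x) = 0 := by
    have h1 : (toDual ℝ (EuclideanSpace ℝ (Fin d))) (g p + γ⁻¹ • (p - x)) = 0 := by
      rw [← hzero]
      ext w
      simp only [toDual_apply_apply, inner_add_left, real_inner_smul_left,
        ContinuousLinearMap.add_apply, ContinuousLinearMap.smul_apply, smul_eq_mul,
        ContinuousLinearMap.coe_smul', Pi.smul_apply, ContinuousLinearMap.coe_comp',
        Function.comp_apply, ContinuousLinearMap.coe_id', id_eq, innerSL_apply_apply, two_smul]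
      field_simp
      ring
    exact (LinearIsometryEquiv.map_eq_zero_iff _).mp h1
  have hxp : x - p = γ • g p := by
    have : γ • (g p + γ⁻¹ • (p - x)) = γ • (0 : EuclideanSpace ℝ (Fin d)) := by rw [hkey]
    rw [smul_add, smul_smul, mul_inv_cancel₀ (ne_of_gt hγ), one_smul, smul_zero] at this
    have h := this
    rw [add_eq_zero_iff_eq_neg] at h
    rw [h]; abel
  set n2 : ℝ := ‖g p‖ ^ 2 with hn2
  have hn2nn : 0 ≤ n2 := by positivity
  -- descent upper bound on f x
  have h1 : f x ≤ f p + γ * n2 + L / 2 * (γ ^ 2 * n2) := by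
    have := aux_descent hL.le hgrad hlip p x
    rw [hxp] at this
    rw [real_inner_smul_right, real_inner_self_eq_norm_sq] at this
    rw [norm_smul, Real.norm_eq_abs, abs_of_pos hγ, mul_pow] at this
    rw [hn2]
    linarith [this]
  -- gradient norm bound: n2 ≤ 2 L (f p - f xs)
  have hmin' : ∀ z, f xs ≤ f z := by
    intro z
    have := aux_subgrad hconv hgrad xs z
    rw [hxs] at this
    simpa using this
  have h2 : n2 ≤ 2 * L * (f p - f xs) := by
    have hd := aux_descent hL.le hgrad hlip p (p - L⁻¹ • g p)
    have he : p - L⁻¹ • g p - p = -(L⁻¹ • g p) := by abel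
    rw [he] at hd
    rw [inner_neg_right, real_inner_smul_right, real_inner_self_eq_norm_sq,
      norm_neg, norm_smul, Real.norm_eq_abs, abs_of_pos (inv_pos.2 hL), mul_pow] at hd
    have hm := hmin' (p - L⁻¹ • g p)
    have hL' : L ≠ 0 := ne_of_gt hL
    rw [← hn2] at hd
    have : f xs ≤ f p - 1 / (2 * L) * n2 := by
      calc f xs ≤ f p + -(L⁻¹ * n2) + L / 2 * ((L⁻¹) ^ 2 * n2) := le_trans hm hd
        _ = f p - 1 / (2 * L) * n2 := by field_simp; ring
    have h2L : 0 < 2 * L := by positivity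
    rw [div_mul_eq_mul_div, one_mul, le_sub_iff_add_le, add_comm, ← le_sub_iff_add_le,
      div_le_iff₀ h2L] at this
    linarith [this]
  have hA : 0 ≤ f p - f xs := by linarith [hmin' p]
  -- conclude
  rw [ge_iff_le, one_div, inv_mul_le_iff₀ (by positivity)]
  nlinarith [mul_nonneg (by positivity : (0:ℝ) ≤ γ + L * γ ^ 2 / 2) (sub_nonneg.2 h2),
    mul_nonneg hγ.le hA, mul_nonneg (mul_nonneg hγ.le hγ.le) (mul_nonneg hL.le hL.le)]
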